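/- Let F : A → B be a fully faithful exact functor between triangulated categories with adjoints L ⊣ F ⊣ R, and suppose the twist T (defined by the triangle FR → id_B → T) and dual twist T' (defined by T' → id_B → FL) exist. Then the restriction of T to ker L ⊆ B lands in ker R and induces an equivalence ker L ≃ ker R; similarly T' induces an equivalence ker R ≃ ker L. -/

import Mathlib

open CategoryTheory Limits Pretriangulated

set_option linter.unusedSectionVars false

open CategoryTheory Limits Pretriangulated

namespace TwistAux

lemma isIso_of_isZero {C : Type*} [Category C] [Limits.HasZeroMorphisms C]
    {X Y : C} (hX : IsZero X) (hY : IsZero Y) (f : X ⟶ Y) : IsIso f :=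
  ⟨0, hX.eq_of_src _ _, hY.eq_of_src _ _⟩

variable {A B : Type*} [Category A] [Category B]
    [HasZeroObject A] [HasZeroObject B] [Preadditive A] [Preadditive B]
    [HasShift A ℤ] [HasShift B ℤ]
    [∀ n : ℤ, (shiftFunctor A n).Additive] [∀ n : ℤ, (shiftFunctor B n).Additive]
    [Pretriangulated A] [Pretriangulated B]
    (F : A ⥤ B) (L R : B ⥤ A)
    [F.CommShift ℤ] [L.CommShift ℤ] [R.CommShift ℤ]
    [F.IsTriangulated] [L.IsTriangulated] [R.IsTriangulated]
    (adjL : L ⊣ F) (adjR : F ⊣ R) [F.Full] [F.Faithful]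

include adjL adjR

lemma kerR_vanish {Z : B} (hZ : IsZero (R.obj Z)) {a : A} (f : F.obj a ⟶ Z) : f = 0 := by
  have h : adjR.homEquiv a Z f = 0 := hZ.eq_of_tgt _ _
  have h2 := (adjR.homEquiv a Z).symm_apply_apply f
  rw [h, Adjunction.homEquiv_counit, Functor.map_zero, zero_comp] at h2
  exact h2.symm

lemma kerR_vanish_shift {Z : B} (hZ : IsZero (R.obj Z)) (n : ℤ) {a : A}
    (f : (F.obj a)⟦n⟧ ⟶ Z) : f = 0 := by
  have h0 : (F.commShiftIso n).hom.app a ≫ f = 0 := kerR_vanish F L R adjL adjR hZ _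
  rw [← cancel_epi ((F.commShiftIso n).hom.app a), h0, comp_zero]

lemma kerL_vanish {Z : B} (hZ : IsZero (L.obj Z)) {a : A} (f : Z ⟶ F.obj a) : f = 0 := by
  have h : (adjL.homEquiv Z a).symm f = 0 := hZ.eq_of_src _ _
  have h2 := (adjL.homEquiv Z a).apply_symm_apply f
  rw [h, Adjunction.homEquiv_unit, Functor.map_zero, comp_zero] at h2
  exact h2.symm

lemma kerL_vanish_shift {Z : B} (hZ : IsZero (L.obj Z)) (n : ℤ) {a : A}
    (f : Z ⟶ (F.obj a)⟦n⟧) : f = 0 := by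
  have h0 : f ≫ (F.commShiftIso n).inv.app a = 0 := kerL_vanish F L R adjL adjR hZ _
  rw [← cancel_mono ((F.commShiftIso n).inv.app a), h0, zero_comp]


lemma R_map_counit_isIso (X : B) : IsIso (R.map (adjR.counit.app X)) := by
  have h : IsIso (adjR.unit.app (R.obj X) ≫ R.map (adjR.counit.app X)) := by
    rw [adjR.right_triangle_components X]; exact IsIso.id _
  exact IsIso.of_isIso_comp_left (adjR.unit.app (R.obj X)) _

lemma L_map_unit_isIso (X : B) : IsIso (L.map (adjL.unit.app X)) := by
  have h : IsIso (L.map (adjL.unit.app X) ≫ adjL.counit.app (L.obj X)) := by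
    rw [adjL.left_triangle_components X]; exact IsIso.id _
  exact IsIso.of_isIso_comp_right _ (adjL.counit.app (L.obj X))

variable (T : B ⥤ B) (α : 𝟭 B ⟶ T) (β : T ⟶ (R ⋙ F) ⋙ shiftFunctor B (1 : ℤ))
    (hT : ∀ X : B, Triangle.mk (adjR.counit.app X) (α.app X) (β.app X) ∈ distTriang B)
    (T' : B ⥤ B) (δ : T' ⟶ 𝟭 B) (γ : L ⋙ F ⟶ T' ⋙ shiftFunctor B (1 : ℤ))
    (hT' : ∀ X : B, Triangle.mk (δ.app X) (adjL.unit.app X) (γ.app X) ∈ distTriang B)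

include hT in
lemma isZero_R_T (X : B) : IsZero (R.obj (T.obj X)) := by
  have h := R.map_distinguished _ (hT X)
  have : IsIso ((R.mapTriangle.obj (Triangle.mk (adjR.counit.app X) (α.app X) (β.app X))).mor₁) :=
    R_map_counit_isIso F L R adjL adjR X
  exact Triangle.isZero₃_of_isIso₁ _ h this

include hT' in
lemma isZero_L_T' (X : B) : IsZero (L.obj (T'.obj X)) := by
  have h := L.map_distinguished _ (hT' X)
  have : IsIso ((L.mapTriangle.obj (Triangle.mk (δ.app X) (adjL.unit.app X) (γ.app X))).mor₂) :=
    L_map_unit_isIso F L R adjL adjR X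
  exact Triangle.isZero₁_of_isIso₂ _ h this


include hT in
lemma T_map_bij (X X' : B) (hX : IsZero (L.obj X)) :
    Function.Bijective (fun f : X ⟶ X' => T.map f) := by
  -- Φ₁ : Hom(X, X') → Hom(X, T X'), f ↦ f ≫ α.app X'
  have h1 : Function.Bijective (fun f : X ⟶ X' => f ≫ α.app X') := by
    constructor
    · intro u v huv
      dsimp at huv
      have hz : (u - v) ≫ α.app X' = 0 := by rw [Preadditive.sub_comp, huv, sub_self]
      obtain ⟨w, hw⟩ := Triangle.coyoneda_exact₂ _ (hT X') (u - v) hz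
      have hw0 : w = 0 := kerL_vanish F L R adjL adjR hX w
      rw [hw0, zero_comp] at hw
      exact sub_eq_zero.1 hw
    · intro v
      have hz : v ≫ β.app X' = 0 :=
        kerL_vanish_shift F L R adjL adjR hX 1 (v ≫ β.app X')
      obtain ⟨f, hf⟩ := Triangle.coyoneda_exact₃ _ (hT X') v hz
      exact ⟨f, hf.symm⟩
  -- Φ₂ : Hom(T X, T X') → Hom(X, T X'), g ↦ α.app X ≫ g
  have h2 : Function.Bijective (fun g : T.obj X ⟶ T.obj X' => α.app X ≫ g) := by
    constructor
    · intro u v huv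
      dsimp at huv
      have hz : α.app X ≫ (u - v) = 0 := by rw [Preadditive.comp_sub, huv, sub_self]
      obtain ⟨w, hw⟩ := Triangle.yoneda_exact₃ _ (hT X) (u - v) hz
      have hw0 : w = 0 :=
        kerR_vanish_shift F L R adjL adjR (isZero_R_T F L R adjL adjR T α β hT X') 1 w
      rw [hw0, comp_zero] at hw
      exact sub_eq_zero.1 hw
    · intro p
      have hz : adjR.counit.app X ≫ p = 0 :=
        kerR_vanish F L R adjL adjR (isZero_R_T F L R adjL adjR T α β hT X') _
      obtain ⟨g, hg⟩ := Triangle.yoneda_exact₂ _ (hT X) p hz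
      exact ⟨g, hg.symm⟩
  constructor
  · intro f g hfg
    dsimp at hfg
    apply h1.injective
    dsimp
    have e1 := α.naturality f
    have e2 := α.naturality g
    dsimp at e1 e2
    rw [e1, e2, hfg]
  · intro g
    obtain ⟨f, hf⟩ := h1.surjective (α.app X ≫ g)
    dsimp at hf
    refine ⟨f, h2.injective ?_⟩
    dsimp
    have e1 := α.naturality f
    dsimp at e1
    rw [← e1, hf]

include hT' in
lemma T'_map_bij (Y Y' : B) (hY' : IsZero (R.obj Y')) :
    Function.Bijective (fun f : Y ⟶ Y' => T'.map f) := by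
  -- Ψ₁ : Hom(Y, Y') → Hom(T' Y, Y'), f ↦ δ.app Y ≫ f
  have h1 : Function.Bijective (fun f : Y ⟶ Y' => δ.app Y ≫ f) := by
    constructor
    · intro u v huv
      dsimp at huv
      have hz : δ.app Y ≫ (u - v) = 0 := by rw [Preadditive.comp_sub, huv, sub_self]
      obtain ⟨w, hw⟩ := Triangle.yoneda_exact₂ _ (hT' Y) (u - v) hz
      have hw0 : w = 0 := kerR_vanish F L R adjL adjR hY' w
      rw [hw0, comp_zero] at hw
      exact sub_eq_zero.1 hw
    · intro v
      have hz : (Triangle.mk (δ.app Y) (adjL.unit.app Y) (γ.app Y)).invRotate.mor₁ ≫ v = 0 :=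
        kerR_vanish_shift F L R adjL adjR hY' (-1) _
      obtain ⟨f, hf⟩ := Triangle.yoneda_exact₂ _
        (inv_rot_of_distTriang _ (hT' Y)) v hz
      exact ⟨f, hf.symm⟩
  -- Ψ₂ : Hom(T' Y, T' Y') → Hom(T' Y, Y'), g ↦ g ≫ δ.app Y'
  have h2 : Function.Bijective (fun g : T'.obj Y ⟶ T'.obj Y' => g ≫ δ.app Y') := by
    constructor
    · intro u v huv
      dsimp at huv
      have hz : (u - v) ≫ δ.app Y' = 0 := by rw [Preadditive.sub_comp, huv, sub_self]
      obtain ⟨w, hw⟩ := Triangle.coyoneda_exact₂ _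
        (inv_rot_of_distTriang _ (hT' Y')) (u - v) hz
      have hw0 : w = 0 :=
        kerL_vanish_shift F L R adjL adjR (isZero_L_T' F L R adjL adjR T' δ γ hT' Y) (-1) w
      rw [hw0, zero_comp] at hw
      exact sub_eq_zero.1 hw
    · intro p
      have hz : p ≫ adjL.unit.app Y' = 0 :=
        kerL_vanish F L R adjL adjR (isZero_L_T' F L R adjL adjR T' δ γ hT' Y) _
      obtain ⟨g, hg⟩ := Triangle.coyoneda_exact₂ _ (hT' Y') p hz
      exact ⟨g, hg.symm⟩
  constructor
  · intro f g hfg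
    dsimp at hfg
    apply h1.injective
    dsimp
    have e1 := δ.naturality f
    have e2 := δ.naturality g
    dsimp at e1 e2
    rw [← e1, ← e2, hfg]
  · intro g
    obtain ⟨f, hf⟩ := h1.surjective (g ≫ δ.app Y')
    dsimp at hf
    refine ⟨f, h2.injective ?_⟩
    dsimp
    have e1 := δ.naturality f
    dsimp at e1
    rw [e1, hf]


include hT hT' in
lemma T_T'_iso (Y : B) (hY : IsZero (R.obj Y)) :
    ∃ g : T.obj (T'.obj Y) ⟶ Y, IsIso g ∧ α.app (T'.obj Y) ≫ g = δ.app Y := by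
  set Tr1 : Triangle B :=
    Triangle.mk (adjR.counit.app (T'.obj Y)) (α.app (T'.obj Y)) (β.app (T'.obj Y)) with hTr1def
  have hTr1 : Tr1 ∈ distTriang B := hT (T'.obj Y)
  set Tr2 : Triangle B := Triangle.mk (δ.app Y) (adjL.unit.app Y) (γ.app Y) with hTr2def
  have hTr2 : Tr2 ∈ distTriang B := hT' Y
  -- construct g with α ≫ g = δ
  have hz : Tr1.mor₁ ≫ δ.app Y = 0 := kerR_vanish F L R adjL adjR hY _
  obtain ⟨g, hg⟩ := Triangle.yoneda_exact₂ _ hTr1 (δ.app Y) hz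
  -- complete to a morphism of triangles rotate Tr1 ⟶ Tr2
  have hrot : Tr1.rotate ∈ distTriang B := rot_of_distTriang _ hTr1
  have hcomm : Tr1.rotate.mor₁ ≫ g = 𝟙 (T'.obj Y) ≫ Tr2.mor₁ := by
    refine Eq.trans ?_ (Category.id_comp _).symm
    exact hg.symm
  obtain ⟨h, hc₂, hc₃⟩ := complete_distinguished_triangle_morphism Tr1.rotate Tr2
    hrot hTr2 (𝟙 (T'.obj Y)) g hcomm
  let φ : Tr1.rotate ⟶ Tr2 := Triangle.homMk _ _ (𝟙 (T'.obj Y)) g h hcomm hc₂ hc₃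
  -- apply R : the mapped hom₃ is an isomorphism
  have d1 : R.mapTriangle.obj Tr1.rotate ∈ distTriang A := R.map_distinguished _ hrot
  have d2 : R.mapTriangle.obj Tr2 ∈ distTriang A := R.map_distinguished _ hTr2
  have i1 : IsIso ((R.mapTriangle.map φ).hom₁) := by
    exact inferInstanceAs (IsIso (R.map (𝟙 (T'.obj Y))))
  have i2 : IsIso ((R.mapTriangle.map φ).hom₂) := by
    dsimp [φ]
    exact isIso_of_isZero (isZero_R_T F L R adjL adjR T α β hT (T'.obj Y)) hY _
  have iRh : IsIso (R.map h) := isIso₃_of_isIso₁₂ (R.mapTriangle.map φ) d1 d2 i1 i2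
  -- transfer the isomorphism property of R.map h to h
  let c : A := R.obj (T'.obj Y)
  let h'' : c⟦(1 : ℤ)⟧ ⟶ L.obj Y := F.preimage ((F.commShiftIso (1 : ℤ)).hom.app c ≫ h)
  have hF : F.map h'' = (F.commShiftIso (1 : ℤ)).hom.app c ≫ h := F.map_preimage _
  have iRFh : IsIso (R.map (F.map h'')) := by
    have e : R.map (F.map h'') = R.map ((F.commShiftIso (1 : ℤ)).hom.app c) ≫ R.map h := by
      rw [hF]; exact R.map_comp _ _
    rw [e]
    haveI := iRh
    exact IsIso.comp_isIso' inferInstance iRh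
  have hnat := adjR.unit.naturality h''
  dsimp at hnat
  have iunit : IsIso (h'' ≫ adjR.unit.app (L.obj Y)) := by
    rw [hnat]
    haveI := iRFh
    infer_instance
  haveI ih'' : IsIso h'' := IsIso.of_isIso_comp_right h'' (adjR.unit.app (L.obj Y))
  have ihh : IsIso h := by
    have : h = (F.commShiftIso (1 : ℤ)).inv.app c ≫ F.map h'' := by
      rw [hF]; exact ((F.commShiftIso (1 : ℤ)).inv_hom_id_app_assoc c h).symm
    rw [this]
    haveI : IsIso (F.map h'') := Functor.map_isIso F h''
    exact IsIso.comp_isIso' ((F.commShiftIso (1 : ℤ)).app c).symm.isIso_hom this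
  have : IsIso φ.hom₂ := isIso₂_of_isIso₁₃ φ hrot hTr2 (inferInstanceAs (IsIso (𝟙 (T'.obj Y)))) ihh
  exact ⟨g, this, hg.symm⟩


include hT hT' in
lemma T'_T_iso (X : B) (hX : IsZero (L.obj X)) :
    ∃ g' : X ⟶ T'.obj (T.obj X), IsIso g' ∧ g' ≫ δ.app (T.obj X) = α.app X := by
  set Tr1 : Triangle B := Triangle.mk (adjR.counit.app X) (α.app X) (β.app X) with hTr1def
  have hTr1 : Tr1 ∈ distTriang B := hT X
  set Tr2 : Triangle B :=
    Triangle.mk (δ.app (T.obj X)) (adjL.unit.app (T.obj X)) (γ.app (T.obj X)) with hTr2def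
  have hTr2 : Tr2 ∈ distTriang B := hT' (T.obj X)
  -- construct g' with g' ≫ δ = α
  have hz : α.app X ≫ Tr2.mor₂ = 0 := kerL_vanish F L R adjL adjR hX _
  obtain ⟨g', hg'⟩ := Triangle.coyoneda_exact₂ _ hTr2 (α.app X) hz
  -- complete to a morphism of triangles rotate Tr1 ⟶ Tr2
  have hrot : Tr1.rotate ∈ distTriang B := rot_of_distTriang _ hTr1
  have hcomm : Tr1.rotate.mor₁ ≫ 𝟙 (T.obj X) = g' ≫ Tr2.mor₁ :=
    (Category.comp_id _).trans hg'
  obtain ⟨h, hc₂, hc₃⟩ := complete_distinguished_triangle_morphism Tr1.rotate Tr2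
    hrot hTr2 g' (𝟙 (T.obj X)) hcomm
  let φ : Tr1.rotate ⟶ Tr2 := Triangle.homMk _ _ g' (𝟙 (T.obj X)) h hcomm hc₂ hc₃
  -- apply L : both mapped triangles have zero first object, so their mor₂ are isos
  have d1 : L.mapTriangle.obj Tr1.rotate ∈ distTriang A := L.map_distinguished _ hrot
  have d2 : L.mapTriangle.obj Tr2 ∈ distTriang A := L.map_distinguished _ hTr2
  have iA : IsIso ((L.mapTriangle.obj Tr1.rotate).mor₂) :=
    (Triangle.isZero₁_iff_isIso₂ _ d1).1 hX
  have iB : IsIso ((L.mapTriangle.obj Tr2).mor₂) :=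
    (Triangle.isZero₁_iff_isIso₂ _ d2).1 (isZero_L_T' F L R adjL adjR T' δ γ hT' (T.obj X))
  have hcomm2 := (L.mapTriangle.map φ).comm₂
  have hIsoComp : IsIso ((L.mapTriangle.obj Tr1.rotate).mor₂ ≫ (L.mapTriangle.map φ).hom₃) := by
    rw [hcomm2]
    have i2 : IsIso ((L.mapTriangle.map φ).hom₂) :=
      inferInstanceAs (IsIso (L.map (𝟙 (T.obj X))))
    haveI := i2
    haveI := iB
    infer_instance
  haveI := iA
  haveI := hIsoComp
  have iLh : IsIso (L.map h) :=
    IsIso.of_isIso_comp_left ((L.mapTriangle.obj Tr1.rotate).mor₂) ((L.mapTriangle.map φ).hom₃)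
  -- transfer the isomorphism property of L.map h to h
  let c : A := R.obj X
  let h'' : c⟦(1 : ℤ)⟧ ⟶ L.obj (T.obj X) :=
    F.preimage ((F.commShiftIso (1 : ℤ)).hom.app c ≫ h)
  have hF : F.map h'' = (F.commShiftIso (1 : ℤ)).hom.app c ≫ h := F.map_preimage _
  have iLFh : IsIso (L.map (F.map h'')) := by
    have e : L.map (F.map h'') = L.map ((F.commShiftIso (1 : ℤ)).hom.app c) ≫ L.map h := by
      rw [hF]; exact L.map_comp _ _
    rw [e]
    haveI := iLh
    exact IsIso.comp_isIso' inferInstance iLh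
  have hnat := adjL.counit.naturality h''
  dsimp at hnat
  have icounit : IsIso (adjL.counit.app (c⟦(1 : ℤ)⟧) ≫ h'') := by
    rw [← hnat]
    haveI := iLFh
    infer_instance
  haveI ih'' : IsIso h'' := by
    haveI := icounit
    exact IsIso.of_isIso_comp_left (adjL.counit.app (c⟦(1 : ℤ)⟧)) h''
  have ihh : IsIso h := by
    have : h = (F.commShiftIso (1 : ℤ)).inv.app c ≫ F.map h'' := by
      rw [hF]; exact ((F.commShiftIso (1 : ℤ)).inv_hom_id_app_assoc c h).symm
    rw [this]
    haveI : IsIso (F.map h'') := Functor.map_isIso F h''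
    exact IsIso.comp_isIso' ((F.commShiftIso (1 : ℤ)).app c).symm.isIso_hom this
  have : IsIso φ.hom₁ :=
    isIso₁_of_isIso₂₃ φ hrot hTr2 (inferInstanceAs (IsIso (𝟙 (T.obj X)))) ihh
  exact ⟨g', this, hg'.symm⟩

end TwistAux

open TwistAux




open CategoryTheory Limits Pretriangulated

/-- For a fully faithful exact functor `F` with adjoints
`L ⊣ F ⊣ R`, twist `T` (with triangle `FR → id → T`) and dual twist `T'`
(with triangle `T' → id → FL`), the twist `T` sends `ker L` into `ker R` and
induces an equivalence `ker L ≃ ker R`; similarly `T'` induces an equivalence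
`ker R ≃ ker L`. -/
theorem twist_equivalence_of_kernels {A B : Type*} [Category A] [Category B]
    [HasZeroObject A] [HasZeroObject B] [Preadditive A] [Preadditive B]
    [HasShift A ℤ] [HasShift B ℤ]
    [∀ n : ℤ, (shiftFunctor A n).Additive] [∀ n : ℤ, (shiftFunctor B n).Additive]
    [Pretriangulated A] [Pretriangulated B]
    (F : A ⥤ B) (L R : B ⥤ A)
    [F.CommShift ℤ] [L.CommShift ℤ] [R.CommShift ℤ]
    [F.IsTriangulated] [L.IsTriangulated] [R.IsTriangulated]
    (adjL : L ⊣ F) (adjR : F ⊣ R) [F.Full] [F.Faithful]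
    -- twist T with its defining triangle of functors FR → id_B → T
    (T : B ⥤ B) (α : 𝟭 B ⟶ T) (β : T ⟶ (R ⋙ F) ⋙ shiftFunctor B (1 : ℤ))
    (hT : ∀ X : B, Triangle.mk (adjR.counit.app X) (α.app X) (β.app X) ∈ distTriang B)
    -- dual twist T' with its defining triangle of functors T' → id_B → FL
    (T' : B ⥤ B) (δ : T' ⟶ 𝟭 B) (γ : L ⋙ F ⟶ T' ⋙ shiftFunctor B (1 : ℤ))
    (hT' : ∀ X : B, Triangle.mk (δ.app X) (adjL.unit.app X) (γ.app X) ∈ distTriang B) :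
    -- T sends ker L into ker R
    (∀ X : B, IsZero (L.obj X) → IsZero (R.obj (T.obj X))) ∧
    -- T induces an equivalence ker L ≃ ker R
    (∃ e : ObjectProperty.FullSubcategory (fun X : B => IsZero (L.obj X)) ≌
        ObjectProperty.FullSubcategory (fun X : B => IsZero (R.obj X)),
      Nonempty (e.functor ⋙ ObjectProperty.ι (fun X : B => IsZero (R.obj X)) ≅
        ObjectProperty.ι (fun X : B => IsZero (L.obj X)) ⋙ T)) ∧
    -- T' sends ker R into ker L
    (∀ X : B, IsZero (R.obj X) → IsZero (L.obj (T'.obj X))) ∧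
    -- T' induces an equivalence ker R ≃ ker L
    (∃ e' : ObjectProperty.FullSubcategory (fun X : B => IsZero (R.obj X)) ≌
        ObjectProperty.FullSubcategory (fun X : B => IsZero (L.obj X)),
      Nonempty (e'.functor ⋙ ObjectProperty.ι (fun X : B => IsZero (L.obj X)) ≅
        ObjectProperty.ι (fun X : B => IsZero (R.obj X)) ⋙ T')) := by
  
  refine ⟨fun X _ => isZero_R_T F L R adjL adjR T α β hT X, ?_,
    fun X _ => isZero_L_T' F L R adjL adjR T' δ γ hT' X, ?_⟩
  · let P : B → Prop := fun X => IsZero (L.obj X)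
    let Q : B → Prop := fun X => IsZero (R.obj X)
    let G : ObjectProperty.FullSubcategory P ⥤ ObjectProperty.FullSubcategory Q :=
      ObjectProperty.lift Q (ObjectProperty.ι P ⋙ T)
        (fun X => isZero_R_T F L R adjL adjR T α β hT X.obj)
    haveI : G.Faithful :=
      ⟨fun {X Y} {f g} hfg => by
        ext; exact (T_map_bij F L R adjL adjR T α β hT X.obj Y.obj X.property).injective
          (congrArg (fun k => k.hom) hfg)⟩
    haveI : G.Full :=
      ⟨fun {X Y} g => by
        obtain ⟨f, hf⟩ := (T_map_bij F L R adjL adjR T α β hT X.obj Y.obj X.property).surjective g.hom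
        exact ⟨⟨f⟩, by ext; exact hf⟩⟩
    haveI : G.EssSurj := by
      refine ⟨fun Y => ?_⟩
      obtain ⟨g, hg, -⟩ :=
        T_T'_iso F L R adjL adjR T α β hT T' δ γ hT' Y.obj Y.property
      haveI := hg
      exact ⟨⟨T'.obj Y.obj, isZero_L_T' F L R adjL adjR T' δ γ hT' Y.obj⟩,
        ⟨(ObjectProperty.ι Q).preimageIso (asIso g)⟩⟩
    haveI : G.IsEquivalence := {}
    exact ⟨G.asEquivalence, ⟨ObjectProperty.liftCompιIso Q _ _⟩⟩
  · let P : B → Prop := fun X => IsZero (L.obj X)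
    let Q : B → Prop := fun X => IsZero (R.obj X)
    let G' : ObjectProperty.FullSubcategory Q ⥤ ObjectProperty.FullSubcategory P :=
      ObjectProperty.lift P (ObjectProperty.ι Q ⋙ T')
        (fun X => isZero_L_T' F L R adjL adjR T' δ γ hT' X.obj)
    haveI : G'.Faithful :=
      ⟨fun {X Y} {f g} hfg => by
        ext; exact (T'_map_bij F L R adjL adjR T' δ γ hT' X.obj Y.obj Y.property).injective
          (congrArg (fun k => k.hom) hfg)⟩
    haveI : G'.Full :=
      ⟨fun {X Y} g => by
        obtain ⟨f, hf⟩ := (T'_map_bij F L R adjL adjR T' δ γ hT' X.obj Y.obj Y.property).surjective g.hom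
        exact ⟨⟨f⟩, by ext; exact hf⟩⟩
    haveI : G'.EssSurj := by
      refine ⟨fun Y => ?_⟩
      obtain ⟨g, hg, -⟩ :=
        T'_T_iso F L R adjL adjR T α β hT T' δ γ hT' Y.obj Y.property
      haveI := hg
      exact ⟨⟨T.obj Y.obj, isZero_R_T F L R adjL adjR T α β hT Y.obj⟩,
        ⟨(ObjectProperty.ι P).preimageIso (asIso g).symm⟩⟩
    haveI : G'.IsEquivalence := {}
    exact ⟨G'.asEquivalence, ⟨ObjectProperty.liftCompιIso P _ _⟩⟩
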